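/- arXiv:1410.0979 — 5 statements merged into one kernel-verified Lean document; each statement's English description precedes it below -/
import Mathlib

section
/- For the Dorfman two-stage expected tests per person E(k,p) = 1 - (1-p)^k + 1/k (k ≥ 2), and E(1,p) = 1, if p > 1 - (1/3)^(1/3) then individual testing is optimal: E(1,p) ≤ E(k,p) for all integers k ≥ 2. -/
open Real Set Filter

/-- Expected number of tests per person in the Dorfman two-stage procedure
with group size `k` and prevalence `p`: `E 1 p = 1` and
`E k p = 1 - (1-p)^k + 1/k` for `k ≥ 2`. -/
noncomputable def E (k : ℕ) (p : ℝ) : ℝ :=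
  if k = 1 then 1 else 1 - (1 - p) ^ k + 1 / k

/-- Optimal expected number of tests per person: infimum over group sizes `k ≥ 1`. -/
noncomputable def Estar (p : ℝ) : ℝ := ⨅ k : ℕ+, E k p

/-- Loss of using group size `k` at prevalence `p`. -/
noncomputable def L (k : ℕ) (p : ℝ) : ℝ := E k p - Estar p

lemma cube_le_three_pow : ∀ k : ℕ, 2 ≤ k → k ^ 3 ≤ 3 ^ k := by
  intro k hk
  induction k with
  | zero => omega
  | succ n ih =>
    rcases Nat.lt_or_ge n 3 with h | h
    · interval_cases n <;> norm_num
    · have h1 := ih (by omega)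
      have h2 : (n + 1) ^ 3 ≤ 3 * n ^ 3 := by nlinarith [Nat.mul_le_mul_right (n*n) h, Nat.mul_le_mul_right n h]
      calc (n + 1) ^ 3 ≤ 3 * n ^ 3 := h2
        _ ≤ 3 * 3 ^ n := by omega
        _ = 3 ^ (n + 1) := by ring

theorem individual_testing_optimal_for_large_p (p : ℝ) (hp0 : 0 < p) (hp1 : p < 1)
    (hp : p > 1 - ((1:ℝ)/3) ^ ((1:ℝ)/3)) :
    ∀ k : ℕ, 2 ≤ k → E 1 p ≤ E k p := by
  intro k hk
  have hk1 : k ≠ 1 := by omega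
  rw [show E 1 p = 1 from if_pos rfl, E, if_neg hk1]
  set q := 1 - p with hq
  have hq0 : 0 < q := by linarith
  have hqlt : q < ((1:ℝ)/3) ^ ((1:ℝ)/3) := by linarith
  have hq3 : q ^ 3 < 1 / 3 := by
    have h := pow_lt_pow_left₀ hqlt hq0.le (by norm_num : 3 ≠ 0)
    calc q ^ 3 < (((1:ℝ)/3) ^ ((1:ℝ)/3)) ^ 3 := h
      _ = 1 / 3 := by
        rw [← Real.rpow_natCast (((1:ℝ)/3) ^ ((1:ℝ)/3)) 3, ← Real.rpow_mul (by norm_num)]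
        norm_num
  have hkpos : (0:ℝ) < k := by positivity
  have hkey : q ^ k ≤ 1 / k := by
    apply le_of_pow_le_pow_left₀ (by norm_num : 3 ≠ 0) (by positivity)
    have h1 : (q ^ k) ^ 3 = (q ^ 3) ^ k := by rw [← pow_mul, ← pow_mul, Nat.mul_comm]
    have h2 : (q ^ 3) ^ k ≤ (1/3 : ℝ) ^ k := by
      apply pow_le_pow_left₀ (by positivity) hq3.le
    have h3 : ((k:ℝ)) ^ 3 ≤ 3 ^ k := by
      have := cube_le_three_pow k hk
      calc ((k:ℝ)) ^ 3 = ((k ^ 3 : ℕ) : ℝ) := by push_cast; ring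
        _ ≤ ((3 ^ k : ℕ) : ℝ) := by exact_mod_cast this
        _ = 3 ^ k := by push_cast; ring
    have h4 : ((1:ℝ)/3) ^ k ≤ 1 / (k:ℝ) ^ 3 := by
      rw [div_pow, one_pow, div_le_div_iff₀ (by positivity) (by positivity)]
      nlinarith
    calc (q ^ k) ^ 3 = (q ^ 3) ^ k := h1
      _ ≤ (1/3:ℝ) ^ k := h2
      _ ≤ 1 / (k:ℝ) ^ 3 := h4
      _ = (1 / (k:ℝ)) ^ 3 := by rw [div_pow, one_pow]
  linarith
end

section
/- A group size of 2 is never optimal for the Dorfman procedure: for every p ∈ (0,1) there exists k ∈ {1,3,4,...} with E(k,p) ≤ E(2,p), and in fact min(E(1,p), E(3,p)) ≤ E(2,p). -/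
open Real Set Filter

theorem group_size_two_never_optimal (p : ℝ) (hp : p ∈ Set.Ioo (0:ℝ) 1) :
    (∃ k : ℕ, 1 ≤ k ∧ k ≠ 2 ∧ E k p ≤ E 2 p) ∧ min (E 1 p) (E 3 p) ≤ E 2 p := by
  obtain ⟨h0, h1⟩ := hp
  have h3 : E 3 p ≤ E 2 p := by
    simp only [E, if_neg (by norm_num : (3:ℕ) ≠ 1), if_neg (by norm_num : (2:ℕ) ≠ 1)]
    push_cast
    nlinarith [sq_nonneg (1 - p - 2/3), sq_nonneg (1-p), sq_nonneg p]
  exact ⟨⟨3, by norm_num, by norm_num, h3⟩, le_trans (min_le_right _ _) h3⟩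
end

section
/- For each integer k ≥ 3, the equation q^k(1-q) = 1/(k(k+1)) has exactly two roots r₁(k) < r₂(k) in (0,1), and both r₁(k) and r₂(k) are strictly increasing in k. -/
open Real Set Filter

namespace TwoRootsAux

noncomputable def f (k : ℕ) (q : ℝ) : ℝ := q ^ k * (1 - q)

noncomputable def c (k : ℕ) : ℝ := 1 / ((k : ℝ) * (k + 1))

lemma f_eq (k : ℕ) : f k = fun q : ℝ => q ^ k - q ^ (k + 1) := by
  funext q; simp only [f]; ring

lemma f_cont (k : ℕ) : Continuous (f k) := by
  unfold f; fun_prop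

lemma deriv_f (k : ℕ) (hk : 1 ≤ k) (x : ℝ) :
    deriv (f k) x = x ^ (k - 1) * (k - (k + 1) * x) := by
  rw [f_eq]
  rw [((hasDerivAt_pow k x).fun_sub (hasDerivAt_pow (k + 1) x)).deriv]
  have h1 : k + 1 - 1 = k := rfl
  rw [h1]
  have hx : x ^ k = x ^ (k - 1) * x := by
    rw [← pow_succ]; congr 1; omega
  rw [hx]; push_cast; ring

lemma f_mono (k : ℕ) (hk : 1 ≤ k) :
    StrictMonoOn (f k) (Icc 0 ((k : ℝ) / (k + 1))) := by
  apply strictMonoOn_of_deriv_pos (convex_Icc _ _) (f_cont k).continuousOn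
  intro x hx
  rw [interior_Icc] at hx
  rw [deriv_f k hk]
  have h1 : (0:ℝ) < x := hx.1
  have hk1 : (0:ℝ) < (k:ℝ) + 1 := by positivity
  have h2 := hx.2
  rw [lt_div_iff₀ hk1] at h2
  have h3 : (0:ℝ) < (k:ℝ) - ((k:ℝ) + 1) * x := by nlinarith
  exact mul_pos (pow_pos h1 _) h3

lemma f_anti (k : ℕ) (hk : 1 ≤ k) :
    StrictAntiOn (f k) (Icc ((k : ℝ) / (k + 1)) 1) := by
  apply strictAntiOn_of_deriv_neg (convex_Icc _ _) (f_cont k).continuousOn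
  intro x hx
  rw [interior_Icc] at hx
  rw [deriv_f k hk]
  have hk1 : (0:ℝ) < (k:ℝ) + 1 := by positivity
  have hk0 : (0:ℝ) < (k:ℝ) := by exact_mod_cast hk
  have h1 : (0:ℝ) < x := lt_trans (by positivity) hx.1
  have h2 := hx.1
  rw [div_lt_iff₀ hk1] at h2
  have h3 : (k:ℝ) - ((k:ℝ) + 1) * x < 0 := by nlinarith
  exact mul_neg_of_pos_of_neg (pow_pos h1 _) h3

lemma c_pos (k : ℕ) (hk : 1 ≤ k) : 0 < c k := by
  have hk0 : (0:ℝ) < (k:ℝ) := by exact_mod_cast hk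
  unfold c; positivity

lemma exp_one_lt_three : Real.exp 1 < 3 := by
  have := Real.exp_one_lt_d9; norm_num at this ⊢; linarith

/-- `f` at the peak exceeds `c k`. -/
lemma key1 (k : ℕ) (hk : 3 ≤ k) : c k < f k ((k : ℝ) / (k + 1)) := by
  have hk0 : (3:ℝ) ≤ (k:ℝ) := by exact_mod_cast hk
  have hkpos : (0:ℝ) < (k:ℝ) := by linarith
  have hk1 : (0:ℝ) < (k:ℝ) + 1 := by linarith
  have hkne : k ≠ 0 := by omega
  -- ((k+1)/k)^k < k
  have h2 : (((k:ℝ) + 1) / k) ^ k < (k:ℝ) := by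
    have e1 : ((k:ℝ) + 1) / k = 1 / k + 1 := by field_simp; ring
    have e2 : (1 / (k:ℝ) + 1) ^ k < Real.exp (1 / k) ^ k := by
      apply pow_lt_pow_left₀ (Real.add_one_lt_exp (by positivity)) (by positivity) hkne
    have e3 : Real.exp (1 / (k:ℝ)) ^ k = Real.exp 1 := by
      rw [← Real.exp_nat_mul]
      congr 1
      field_simp
    calc (((k:ℝ) + 1) / k) ^ k = (1 / (k:ℝ) + 1) ^ k := by rw [e1]
      _ < Real.exp (1 / (k:ℝ)) ^ k := e2
      _ = Real.exp 1 := e3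
      _ < 3 := exp_one_lt_three
      _ ≤ (k:ℝ) := hk0
  have hKk : (0:ℝ) < (k:ℝ) ^ k := pow_pos hkpos k
  have hK1k : (0:ℝ) < ((k:ℝ) + 1) ^ k := pow_pos hk1 k
  rw [div_pow, div_lt_iff₀ hKk] at h2
  -- f k (k/(k+1)) = (k/(k+1))^k * (1/(k+1))
  have e : f k ((k:ℝ) / (k + 1)) = ((k:ℝ) ^ k / ((k:ℝ) + 1) ^ k) * ((1:ℝ) / ((k:ℝ) + 1)) := by
    unfold f
    rw [div_pow]
    congr 1
    field_simp; ring
  rw [e]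
  unfold c
  have e2 : (k:ℝ) ^ k / ((k:ℝ) + 1) ^ k * ((1:ℝ) / ((k:ℝ) + 1)) =
      (k:ℝ) ^ k / (((k:ℝ) + 1) ^ k * ((k:ℝ) + 1)) := by
    field_simp
  rw [e2, div_lt_div_iff₀ (by positivity) (by positivity)]
  nlinarith

/-- `f k (k/(k+2))` exceeds `c k`. -/
lemma key2 (k : ℕ) (hk : 3 ≤ k) : c k < f k ((k : ℝ) / (k + 2)) := by
  have hk0 : (3:ℝ) ≤ (k:ℝ) := by exact_mod_cast hk
  have hkpos : (0:ℝ) < (k:ℝ) := by linarith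
  have hk2 : (0:ℝ) < (k:ℝ) + 2 := by linarith
  -- key inequality: ((k+2)/k)^k < 2k(k+1)/(k+2)
  have h2 : (((k:ℝ) + 2) / k) ^ k < 2 * k * (k + 1) / (k + 2) := by
    rcases (by omega : k = 3 ∨ k = 4 ∨ k = 5 ∨ 6 ≤ k) with h | h | h | h
    · subst h; norm_num
    · subst h; norm_num
    · subst h; norm_num
    · have hk6 : (6:ℝ) ≤ (k:ℝ) := by exact_mod_cast h
      have hkne : k ≠ 0 := by omega
      have e1 : ((k:ℝ) + 2) / k = 2 / k + 1 := by field_simp; ring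
      have e2 : (2 / (k:ℝ) + 1) ^ k < Real.exp (2 / k) ^ k := by
        apply pow_lt_pow_left₀ (Real.add_one_lt_exp (by positivity)) (by positivity) hkne
      have e3 : Real.exp (2 / (k:ℝ)) ^ k = Real.exp 2 := by
        rw [← Real.exp_nat_mul]
        congr 1
        field_simp
      have e4 : Real.exp 2 < 9 := by
        have h1 : Real.exp 2 = Real.exp 1 * Real.exp 1 := by
          rw [← Real.exp_add]; norm_num
        have := exp_one_lt_three
        have hpos := Real.exp_pos 1
        nlinarith
      have e5 : (9:ℝ) ≤ 2 * k * (k + 1) / (k + 2) := by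
        rw [le_div_iff₀ hk2]
        nlinarith
      calc (((k:ℝ) + 2) / k) ^ k = (2 / (k:ℝ) + 1) ^ k := by rw [e1]
        _ < Real.exp (2 / (k:ℝ)) ^ k := e2
        _ = Real.exp 2 := e3
        _ < 9 := e4
        _ ≤ 2 * k * (k + 1) / (k + 2) := e5
  have hKk : (0:ℝ) < (k:ℝ) ^ k := pow_pos hkpos k
  have hK2k : (0:ℝ) < ((k:ℝ) + 2) ^ k := pow_pos hk2 k
  rw [div_pow, div_lt_div_iff₀ hKk hk2] at h2
  have e : f k ((k:ℝ) / (k + 2)) = ((k:ℝ) ^ k / ((k:ℝ) + 2) ^ k) * ((2:ℝ) / ((k:ℝ) + 2)) := by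
    unfold f
    rw [div_pow]
    congr 1
    field_simp; ring
  rw [e]
  unfold c
  have e2 : (k:ℝ) ^ k / ((k:ℝ) + 2) ^ k * ((2:ℝ) / ((k:ℝ) + 2)) =
      2 * (k:ℝ) ^ k / (((k:ℝ) + 2) ^ k * ((k:ℝ) + 2)) := by
    field_simp
  rw [e2, div_lt_div_iff₀ (by positivity) (by positivity)]
  nlinarith

lemma f_zero (k : ℕ) (hk : 1 ≤ k) : f k 0 = 0 := by
  unfold f; rw [zero_pow (by omega)]; ring

lemma f_one (k : ℕ) : f k 1 = 0 := by unfold f; ring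

lemma peak_pos (k : ℕ) (hk : 1 ≤ k) : (0:ℝ) < (k:ℝ) / (k + 1) := by
  have : (0:ℝ) < (k:ℝ) := by exact_mod_cast hk
  positivity

lemma peak_lt_one (k : ℕ) : (k:ℝ) / (k + 1) < 1 := by
  rw [div_lt_one (by positivity)]; linarith

lemma exists_r1 (k : ℕ) (hk : 3 ≤ k) :
    ∃ x ∈ Ioo (0:ℝ) ((k:ℝ) / (k + 1)), f k x = c k := by
  have hk1 : 1 ≤ k := by omega
  have hsub := intermediate_value_Icc (le_of_lt (peak_pos k hk1)) (f_cont k).continuousOn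
  have hc : c k ∈ Icc (f k 0) (f k ((k:ℝ)/(k+1))) := by
    rw [f_zero k hk1]
    exact ⟨le_of_lt (c_pos k hk1), le_of_lt (key1 k hk)⟩
  obtain ⟨x, hx, hfx⟩ := hsub hc
  refine ⟨x, ⟨?_, ?_⟩, hfx⟩
  · rcases lt_or_eq_of_le hx.1 with h | h
    · exact h
    · exfalso; rw [← h, f_zero k hk1] at hfx; exact absurd hfx.symm (ne_of_gt (c_pos k hk1))
  · rcases lt_or_eq_of_le hx.2 with h | h
    · exact h
    · exfalso; rw [h] at hfx; exact absurd hfx (ne_of_gt (key1 k hk))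

lemma exists_r2 (k : ℕ) (hk : 3 ≤ k) :
    ∃ x ∈ Ioo ((k:ℝ) / (k + 1)) 1, f k x = c k := by
  have hk1 : 1 ≤ k := by omega
  have hsub := intermediate_value_Icc' (le_of_lt (peak_lt_one k)) (f_cont k).continuousOn
  have hc : c k ∈ Icc (f k 1) (f k ((k:ℝ)/(k+1))) := by
    rw [f_one k]
    exact ⟨le_of_lt (c_pos k hk1), le_of_lt (key1 k hk)⟩
  obtain ⟨x, hx, hfx⟩ := hsub hc
  refine ⟨x, ⟨?_, ?_⟩, hfx⟩
  · rcases lt_or_eq_of_le hx.1 with h | h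
    · exact h
    · exfalso; rw [← h] at hfx; exact absurd hfx (ne_of_gt (key1 k hk))
  · rcases lt_or_eq_of_le hx.2 with h | h
    · exact h
    · exfalso; rw [h, f_one k] at hfx; exact absurd hfx.symm (ne_of_gt (c_pos k hk1))

open Classical in
noncomputable def r1 (k : ℕ) : ℝ :=
  if h : ∃ x ∈ Ioo (0:ℝ) ((k:ℝ) / (k + 1)), f k x = c k then h.choose else 0

open Classical in
noncomputable def r2 (k : ℕ) : ℝ :=
  if h : ∃ x ∈ Ioo ((k:ℝ) / (k + 1)) 1, f k x = c k then h.choose else 0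

lemma r1_spec (k : ℕ) (hk : 3 ≤ k) :
    r1 k ∈ Ioo (0:ℝ) ((k:ℝ) / (k + 1)) ∧ f k (r1 k) = c k := by
  have h := exists_r1 k hk
  classical rw [r1, dif_pos h]
  exact h.choose_spec

lemma r2_spec (k : ℕ) (hk : 3 ≤ k) :
    r2 k ∈ Ioo ((k:ℝ) / (k + 1)) 1 ∧ f k (r2 k) = c k := by
  have h := exists_r2 k hk
  classical rw [r2, dif_pos h]
  exact h.choose_spec

lemma uniq (k : ℕ) (hk : 3 ≤ k) (q : ℝ) (hq : q ∈ Ioo (0:ℝ) 1)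
    (hfq : f k q = c k) : q = r1 k ∨ q = r2 k := by
  have hk1 : 1 ≤ k := by omega
  obtain ⟨h1mem, h1val⟩ := r1_spec k hk
  obtain ⟨h2mem, h2val⟩ := r2_spec k hk
  rcases le_or_gt q ((k:ℝ) / (k + 1)) with h | h
  · left
    have hmem : q ∈ Icc (0:ℝ) ((k:ℝ)/(k+1)) := ⟨le_of_lt hq.1, h⟩
    have hmem' : r1 k ∈ Icc (0:ℝ) ((k:ℝ)/(k+1)) := ⟨le_of_lt h1mem.1, le_of_lt h1mem.2⟩
    exact (f_mono k hk1).injOn hmem hmem' (by rw [hfq, h1val])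
  · right
    have hmem : q ∈ Icc ((k:ℝ)/(k+1)) 1 := ⟨le_of_lt h, le_of_lt hq.2⟩
    have hmem' : r2 k ∈ Icc ((k:ℝ)/(k+1)) 1 := ⟨le_of_lt h2mem.1, le_of_lt h2mem.2⟩
    exact (f_anti k hk1).injOn hmem hmem' (by rw [hfq, h2val])

lemma c_succ (k : ℕ) (hk : 3 ≤ k) :
    ((k:ℝ) / (k + 2)) * c k = c (k + 1) := by
  have hk0 : (0:ℝ) < (k:ℝ) := by exact_mod_cast (by omega : 0 < k)
  unfold c
  push_cast
  field_simp
  ring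

lemma f_succ (k : ℕ) (x : ℝ) : f (k + 1) x = x * f k x := by
  unfold f; rw [pow_succ]; ring

lemma r1_lt (k : ℕ) (hk : 3 ≤ k) : r1 k < (k:ℝ) / (k + 2) := by
  have hk1 : 1 ≤ k := by omega
  obtain ⟨h1mem, h1val⟩ := r1_spec k hk
  have hpk : (k:ℝ) / (k + 2) ≤ (k:ℝ) / (k + 1) := by
    apply div_le_div_of_nonneg_left (by positivity) (by positivity) (by linarith)
  have hmem : r1 k ∈ Icc (0:ℝ) ((k:ℝ)/(k+1)) := ⟨le_of_lt h1mem.1, le_of_lt h1mem.2⟩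
  have hmem' : (k:ℝ)/(k+2) ∈ Icc (0:ℝ) ((k:ℝ)/(k+1)) := ⟨by positivity, hpk⟩
  rw [← (f_mono k hk1).lt_iff_lt hmem hmem', h1val]
  exact key2 k hk

lemma r1_mono (k : ℕ) (hk : 3 ≤ k) : r1 k < r1 (k + 1) := by
  have hk1 : 1 ≤ k := by omega
  obtain ⟨h1mem, h1val⟩ := r1_spec k hk
  obtain ⟨h1mem', h1val'⟩ := r1_spec (k + 1) (by omega)
  have hlt := r1_lt k hk
  have hcast : ((k + 1 : ℕ) : ℝ) = (k:ℝ) + 1 := by push_cast; ring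
  -- f (k+1) (r1 k) < c (k+1)
  have hfval : f (k + 1) (r1 k) < c (k + 1) := by
    rw [f_succ, h1val, ← c_succ k hk]
    exact mul_lt_mul_of_pos_right hlt (c_pos k hk1)
  have hub : (k:ℝ) / (k + 2) ≤ ((k:ℝ) + 1) / ((k:ℝ) + 2) := by
    apply div_le_div_of_nonneg_right (by linarith) (by positivity)
  have hmem : r1 k ∈ Icc (0:ℝ) (((k:ℝ)+1)/((k:ℝ)+2)) :=
    ⟨le_of_lt h1mem.1, le_of_lt (lt_of_lt_of_le hlt hub)⟩
  have hmem' : r1 (k+1) ∈ Icc (0:ℝ) (((k:ℝ)+1)/((k:ℝ)+2)) := by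
    rw [hcast, show ((k:ℝ) + 1 + 1) = ((k:ℝ) + 2) from by ring] at h1mem'
    exact ⟨le_of_lt h1mem'.1, le_of_lt h1mem'.2⟩
  have hmono := f_mono (k + 1) (by omega)
  rw [hcast] at hmono
  have : (((k:ℝ)+1) + 1) = (k:ℝ) + 2 := by ring
  rw [this] at hmono
  rw [← hmono.lt_iff_lt hmem hmem', h1val']
  exact hfval

lemma r2_mono (k : ℕ) (hk : 3 ≤ k) : r2 k < r2 (k + 1) := by
  have hk1 : 1 ≤ k := by omega
  obtain ⟨h2mem, h2val⟩ := r2_spec k hk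
  obtain ⟨h2mem', h2val'⟩ := r2_spec (k + 1) (by omega)
  have hcast : ((k + 1 : ℕ) : ℝ) = (k:ℝ) + 1 := by push_cast; ring
  have hkpos : (0:ℝ) < (k:ℝ) := by exact_mod_cast (by omega : 0 < k)
  rw [hcast] at h2mem'
  have hsum : (((k:ℝ)+1) + 1) = (k:ℝ) + 2 := by ring
  rw [hsum] at h2mem'
  -- r2 k > k/(k+2)
  have hgt : (k:ℝ) / (k + 2) < r2 k := by
    have : (k:ℝ) / (k + 2) < (k:ℝ) / (k + 1) := by
      apply div_lt_div_of_pos_left hkpos (by positivity) (by linarith)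
    exact lt_trans this h2mem.1
  -- f (k+1) (r2 k) > c (k+1)
  have hfval : c (k + 1) < f (k + 1) (r2 k) := by
    rw [f_succ, h2val, ← c_succ k hk]
    exact mul_lt_mul_of_pos_right hgt (c_pos k hk1)
  rcases le_or_gt (r2 k) (((k:ℝ)+1)/((k:ℝ)+2)) with h | h
  · exact lt_of_le_of_lt h h2mem'.1
  · have hanti := f_anti (k + 1) (by omega)
    rw [hcast, hsum] at hanti
    have hmem : r2 k ∈ Icc (((k:ℝ)+1)/((k:ℝ)+2)) 1 := ⟨le_of_lt h, le_of_lt h2mem.2⟩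
    have hmem' : r2 (k+1) ∈ Icc (((k:ℝ)+1)/((k:ℝ)+2)) 1 :=
      ⟨le_of_lt h2mem'.1, le_of_lt h2mem'.2⟩
    rw [← hanti.lt_iff_gt hmem' hmem, h2val']
    exact hfval

end TwoRootsAux

theorem two_roots_and_monotone :
    ∃ r₁ r₂ : ℕ → ℝ, ∀ k : ℕ, 3 ≤ k →
      (r₁ k ∈ Set.Ioo (0:ℝ) 1 ∧ r₂ k ∈ Set.Ioo (0:ℝ) 1 ∧ r₁ k < r₂ k ∧
        (r₁ k) ^ k * (1 - r₁ k) = 1 / (k * (k+1)) ∧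
        (r₂ k) ^ k * (1 - r₂ k) = 1 / (k * (k+1)) ∧
        (∀ q ∈ Set.Ioo (0:ℝ) 1, q ^ k * (1 - q) = 1 / (k * (k+1)) → q = r₁ k ∨ q = r₂ k)) ∧
      r₁ k < r₁ (k+1) ∧ r₂ k < r₂ (k+1) := by
  refine ⟨TwoRootsAux.r1, TwoRootsAux.r2, fun k hk => ?_⟩
  obtain ⟨h1mem, h1val⟩ := TwoRootsAux.r1_spec k hk
  obtain ⟨h2mem, h2val⟩ := TwoRootsAux.r2_spec k hk
  have hk1 : 1 ≤ k := by omega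
  refine ⟨⟨⟨h1mem.1, lt_trans h1mem.2 (TwoRootsAux.peak_lt_one k)⟩,
    ⟨lt_trans (TwoRootsAux.peak_pos k hk1) h2mem.1, h2mem.2⟩,
    lt_trans h1mem.2 h2mem.1, h1val, h2val,
    fun q hq hfq => TwoRootsAux.uniq k hk q hq hfq⟩,
    TwoRootsAux.r1_mono k hk, TwoRootsAux.r2_mono k hk⟩
end

section
/- Let q₂* = (1/3)^(1/3) and for l ≥ 3 let q_l* be the larger root in (0,1) of q^l(1-q) = 1/(l(l+1)). If q ≤ (1/3)^(1/3) then group size 1 minimizes E(k, 1-q) over all positive integers k, and if q_{l-1}* < q < q_l* for some l ≥ 3 then group size l is the minimizer. -/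
open Real Set Filter

/- ### Auxiliary lemmas -/

private lemma SI.hasDeriv_phi (j : ℕ) (hj : 1 ≤ j) (x : ℝ) :
    HasDerivAt (fun q : ℝ => q ^ j * (1 - q)) (x ^ (j-1) * ((j:ℝ) - (j+1)*x)) x := by
  have h1 : HasDerivAt (fun q : ℝ => q ^ j) ((j:ℝ) * x ^ (j-1)) x := hasDerivAt_pow j x
  have h2 : HasDerivAt (fun q : ℝ => 1 - q) (-1) x := by
    simpa using (hasDerivAt_id x).const_sub 1
  have h := h1.mul h2
  refine h.congr_deriv ?_
  have hx : x ^ j = x ^ (j-1) * x := by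
    conv_lhs => rw [show j = (j-1)+1 from (Nat.succ_pred_eq_of_pos hj).symm]
    ring
  rw [hx]; ring

private lemma SI.phi_mono (j : ℕ) (hj : 1 ≤ j) :
    StrictMonoOn (fun q : ℝ => q ^ j * (1 - q)) (Icc 0 ((j:ℝ)/(j+1))) := by
  apply strictMonoOn_of_deriv_pos (convex_Icc _ _)
  · exact (by continuity : Continuous fun q : ℝ => q ^ j * (1 - q)).continuousOn
  · intro x hx
    rw [interior_Icc, mem_Ioo] at hx
    rw [(SI.hasDeriv_phi j hj x).deriv]
    have h1 : 0 < x ^ (j-1) := pow_pos hx.1 _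
    have h2 : (0:ℝ) < (j:ℝ) - (j+1)*x := by
      have hj1 : (0:ℝ) < (j:ℝ)+1 := by positivity
      nlinarith [(lt_div_iff₀ hj1).mp hx.2]
    exact mul_pos h1 h2

private lemma SI.phi_anti (j : ℕ) (hj : 1 ≤ j) :
    StrictAntiOn (fun q : ℝ => q ^ j * (1 - q)) (Icc ((j:ℝ)/(j+1)) 1) := by
  have hm : (0:ℝ) < (j:ℝ)/(j+1) := by
    apply div_pos (by exact_mod_cast hj) (by positivity)
  apply strictAntiOn_of_deriv_neg (convex_Icc _ _)
  · exact (by continuity : Continuous fun q : ℝ => q ^ j * (1 - q)).continuousOn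
  · intro x hx
    rw [interior_Icc, mem_Ioo] at hx
    rw [(SI.hasDeriv_phi j hj x).deriv]
    have h1 : 0 < x ^ (j-1) := pow_pos (lt_trans hm hx.1) _
    have h2 : (j:ℝ) - (j+1)*x < 0 := by
      have hj1 : (0:ℝ) < (j:ℝ)+1 := by positivity
      nlinarith [(div_lt_iff₀ hj1).mp hx.1]
    exact mul_neg_of_pos_of_neg h1 h2

/-- The largest root of `q^j(1-q) = 1/(j(j+1))` lies past the maximizer `j/(j+1)`. -/
private lemma SI.root_ge (j : ℕ) (hj : 3 ≤ j) (s : ℝ) (hs : s ∈ Ioo (0:ℝ) 1)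
    (heq : s ^ j * (1-s) = 1/((j:ℝ)*(j+1)))
    (hmax : ∀ q ∈ Ioo (0:ℝ) 1, q ^ j * (1-q) = 1/((j:ℝ)*(j+1)) → q ≤ s) :
    (j:ℝ)/(j+1) ≤ s := by
  set m : ℝ := (j:ℝ)/(j+1) with hmdef
  have hj1 : (1:ℕ) ≤ j := by omega
  have hm0 : (0:ℝ) < m := div_pos (by exact_mod_cast hj1) (by positivity)
  have hm1 : m < 1 := by
    rw [hmdef, div_lt_one (by positivity)]; linarith
  by_contra hlt
  push_neg at hlt
  have hmono := SI.phi_mono j hj1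
  have hsm : s ∈ Icc (0:ℝ) m := ⟨le_of_lt hs.1, le_of_lt hlt⟩
  have hmm : m ∈ Icc (0:ℝ) m := ⟨le_of_lt hm0, le_refl _⟩
  have hgt : 1/((j:ℝ)*(j+1)) < m ^ j * (1-m) := by
    have := hmono hsm hmm hlt
    simpa [heq] using this
  have hc0 : (0:ℝ) ≤ 1/((j:ℝ)*(j+1)) := by positivity
  have hcont : ContinuousOn (fun q : ℝ => q ^ j * (1 - q)) (Icc m 1) :=
    (by continuity : Continuous fun q : ℝ => q ^ j * (1 - q)).continuousOn
  have hiv := intermediate_value_Icc' (le_of_lt hm1) hcont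
  have hmem : 1/((j:ℝ)*(j+1)) ∈
      Icc ((fun q : ℝ => q ^ j * (1 - q)) 1) ((fun q : ℝ => q ^ j * (1 - q)) m) := by
    constructor
    · simpa using hc0
    · exact le_of_lt hgt
  obtain ⟨t, ht, hteq⟩ := hiv hmem
  have ht1 : t ≠ 1 := by
    intro h
    rw [h] at hteq
    have h0 : (0:ℝ) < 1/((j:ℝ)*(j+1)) := by positivity
    simp at hteq
    rcases hteq with h'|h'
    · have hp : (0:ℝ) < (j:ℝ)+1 := by positivity
      linarith
    · omega
  have htle := hmax t ⟨lt_of_lt_of_le hm0 ht.1, lt_of_le_of_ne ht.2 ht1⟩ hteq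
  linarith [ht.1]

/-- The largest roots are monotone in `j`. -/
private lemma SI.root_mono_step (j : ℕ) (hj : 3 ≤ j) (s t : ℝ)
    (hs : s ∈ Ioo (0:ℝ) 1) (hseq : s ^ j * (1-s) = 1/((j:ℝ)*(j+1)))
    (hsge : (j:ℝ)/(j+1) ≤ s)
    (ht : t ∈ Ioo (0:ℝ) 1)
    (htmax : ∀ q ∈ Ioo (0:ℝ) 1, q ^ (j+1) * (1-q) = 1/(((j:ℝ)+1)*((j:ℝ)+1+1)) → q ≤ t) :
    s ≤ t := by
  have hj0 : (0:ℝ) < (j:ℝ) := by exact_mod_cast (by omega : 0 < j)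
  have hfs : s ^ (j+1) * (1-s) = s / ((j:ℝ)*(j+1)) := by
    rw [pow_succ]
    rw [show s ^ j * s * (1-s) = s * (s ^ j * (1-s)) by ring, hseq]
    ring
  have hc : (1:ℝ)/(((j:ℝ)+1)*((j:ℝ)+1+1)) ≤ s ^ (j+1) * (1-s) := by
    rw [hfs]
    rw [div_le_div_iff₀ (by positivity) (by positivity)]
    have hd : (j:ℝ)/((j:ℝ)+2) ≤ s := by
      refine le_trans ?_ hsge
      rw [div_le_div_iff₀ (by positivity) (by positivity)]
      nlinarith
    have h2 : (j:ℝ) ≤ s*((j:ℝ)+2) := (div_le_iff₀ (by positivity)).mp hd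
    nlinarith [mul_le_mul_of_nonneg_right h2 (by positivity : (0:ℝ) ≤ (j:ℝ)+1)]
  have hcont : ContinuousOn (fun q : ℝ => q ^ (j+1) * (1 - q)) (Icc s 1) :=
    (by continuity : Continuous fun q : ℝ => q ^ (j+1) * (1 - q)).continuousOn
  have hiv := intermediate_value_Icc' (le_of_lt hs.2) hcont
  have hmem : 1/(((j:ℝ)+1)*((j:ℝ)+1+1)) ∈
      Icc ((fun q : ℝ => q ^ (j+1) * (1 - q)) 1) ((fun q : ℝ => q ^ (j+1) * (1 - q)) s) := by
    constructor
    · simp; positivity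
    · exact hc
  obtain ⟨u, hu, hueq⟩ := hiv hmem
  have hu1 : u ≠ 1 := by
    intro h
    rw [h] at hueq
    simp at hueq
    have hp : (0:ℝ) < (j:ℝ)+1 := by positivity
    rcases hueq with h'|h'
    · linarith
    · linarith
  have := htmax u ⟨lt_of_lt_of_le hs.1 hu.1, lt_of_le_of_ne hu.2 hu1⟩ hueq
  linarith [hu.1]

private lemma SI.E_one (p : ℝ) : E 1 p = 1 := by simp [E]

private lemma SI.E_of_ne (k : ℕ) (hk : k ≠ 1) (q : ℝ) :
    E k (1-q) = 1 - q ^ k + 1 / k := by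
  have h : (1 - (1 - q)) = q := by ring
  simp only [E, if_neg hk, h]

private lemma SI.E_diff (j : ℕ) (hj : 2 ≤ j) (q : ℝ) :
    E (j+1) (1-q) - E j (1-q) = q^j*(1-q) - 1/((j:ℝ)*(j+1)) := by
  rw [SI.E_of_ne j (by omega), SI.E_of_ne (j+1) (by omega)]
  have hj0 : (j:ℝ) ≠ 0 := by exact_mod_cast (by omega : j ≠ 0)
  have hj1 : (j:ℝ)+1 ≠ 0 := by positivity
  push_cast
  field_simp
  ring

private lemma SI.c_pos : (0:ℝ) < ((1:ℝ)/3) ^ ((1:ℝ)/3) := Real.rpow_pos_of_pos (by norm_num) _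

private lemma SI.c_cube : (((1:ℝ)/3) ^ ((1:ℝ)/3)) ^ (3:ℕ) = 1/3 := by
  rw [← Real.rpow_natCast (((1:ℝ)/3) ^ ((1:ℝ)/3)) 3, ← Real.rpow_mul (by norm_num)]
  norm_num

private lemma SI.c_le : ((1:ℝ)/3) ^ ((1:ℝ)/3) ≤ 3/4 := by
  have h3 : (((1:ℝ)/3) ^ ((1:ℝ)/3)) ^ (3:ℕ) ≤ ((3:ℝ)/4) ^ (3:ℕ) := by
    rw [SI.c_cube]; norm_num
  exact le_of_pow_le_pow_left₀ (by norm_num) (by norm_num) h3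

private lemma SI.c_ge : (2:ℝ)/3 ≤ ((1:ℝ)/3) ^ ((1:ℝ)/3) := by
  have h3 : ((2:ℝ)/3) ^ (3:ℕ) ≤ (((1:ℝ)/3) ^ ((1:ℝ)/3)) ^ (3:ℕ) := by
    rw [SI.c_cube]; norm_num
  exact le_of_pow_le_pow_left₀ (by norm_num) (le_of_lt SI.c_pos) h3

private lemma SI.c_sq : (((1:ℝ)/3) ^ ((1:ℝ)/3)) ^ (2:ℕ) ≤ 1/2 := by
  have h : ((((1:ℝ)/3) ^ ((1:ℝ)/3)) ^ (2:ℕ)) ^ (3:ℕ) ≤ ((1:ℝ)/2) ^ (3:ℕ) := by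
    rw [← pow_mul, show 2*3 = 3*2 by ring, pow_mul, SI.c_cube]
    norm_num
  exact le_of_pow_le_pow_left₀ (by norm_num) (by norm_num) h

private lemma SI.c_pow_le3 (k : ℕ) (hk : 3 ≤ k) : (((1:ℝ)/3) ^ ((1:ℝ)/3)) ^ k ≤ 1/(k:ℝ) := by
  set c : ℝ := ((1:ℝ)/3) ^ ((1:ℝ)/3) with hc
  induction k, hk using Nat.le_induction with
  | base => exact_mod_cast SI.c_cube.le
  | succ n h' ihn =>
      have hn0 : (0:ℝ) < (n:ℝ) := by exact_mod_cast (by omega : 0 < n)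
      have h2 : c * c ^ n ≤ c * (1/(n:ℝ)) :=
        mul_le_mul_of_nonneg_left ihn (le_of_lt SI.c_pos)
      have h3 : c * (1/(n:ℝ)) ≤ (3/4) * (1/(n:ℝ)) :=
        mul_le_mul_of_nonneg_right SI.c_le (by positivity)
      have h4 : (3:ℝ)/4 * (1/(n:ℝ)) ≤ 1/((n:ℝ)+1) := by
        have h5 : (3:ℝ) ≤ (n:ℝ) := by exact_mod_cast h'
        rw [show (3:ℝ)/4 * (1/(n:ℝ)) = 3/(4*(n:ℝ)) by ring,
          div_le_div_iff₀ (by positivity) (by positivity)]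
        nlinarith
      push_cast
      calc c ^ (n+1) = c * c ^ n := by ring
        _ ≤ c * (1/(n:ℝ)) := h2
        _ ≤ (3/4) * (1/(n:ℝ)) := h3
        _ ≤ 1/((n:ℝ)+1) := h4

private lemma SI.c_pow_le (k : ℕ) (hk : 2 ≤ k) : (((1:ℝ)/3) ^ ((1:ℝ)/3)) ^ k ≤ 1/(k:ℝ) := by
  rcases Nat.lt_or_ge k 3 with h|h
  · have hk2 : k = 2 := by omega
    subst hk2
    exact_mod_cast SI.c_sq
  · exact SI.c_pow_le3 k h

theorem samuels_inverse (qstar : ℕ → ℝ)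
    (hq2 : qstar 2 = ((1:ℝ)/3) ^ ((1:ℝ)/3))
    (hroot : ∀ l : ℕ, 3 ≤ l → qstar l ∈ Set.Ioo (0:ℝ) 1 ∧
      (qstar l) ^ l * (1 - qstar l) = 1 / (l * (l+1)) ∧
      (∀ q ∈ Set.Ioo (0:ℝ) 1, q ^ l * (1 - q) = 1 / (l * (l+1)) → q ≤ qstar l)) :
    (∀ q : ℝ, 0 < q → q ≤ ((1:ℝ)/3) ^ ((1:ℝ)/3) →
      ∀ k : ℕ, 1 ≤ k → E 1 (1 - q) ≤ E k (1 - q)) ∧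
    (∀ l : ℕ, 3 ≤ l → ∀ q : ℝ, qstar (l-1) < q → q < qstar l →
      ∀ k : ℕ, 1 ≤ k → E l (1 - q) ≤ E k (1 - q)) := by
  have hge : ∀ j : ℕ, 3 ≤ j → (j:ℝ)/(j+1) ≤ qstar j := by
    intro j hj
    exact SI.root_ge j hj _ (hroot j hj).1 (hroot j hj).2.1 (hroot j hj).2.2
  have hmono : ∀ i j : ℕ, 3 ≤ i → i ≤ j → qstar i ≤ qstar j := by
    intro i j hi hij
    induction j, hij using Nat.le_induction with
    | base => exact le_refl _
    | succ n hn ih =>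
      refine le_trans ih ?_
      have hn3 : 3 ≤ n := le_trans hi hn
      have hmax := (hroot (n+1) (by omega)).2.2
      push_cast at hmax
      exact SI.root_mono_step n hn3 _ _ (hroot n hn3).1 (hroot n hn3).2.1 (hge n hn3)
        (hroot (n+1) (by omega)).1 hmax
  constructor
  · -- Part 1
    intro q hq0 hqc k hk
    rcases eq_or_lt_of_le hk with h1|h1
    · rw [← h1]
    · have hk2 : k ≠ 1 := by omega
      rw [SI.E_one, SI.E_of_ne k hk2]
      have h2 : q ^ k ≤ (((1:ℝ)/3) ^ ((1:ℝ)/3)) ^ k := pow_le_pow_left₀ (le_of_lt hq0) hqc k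
      have h3 := SI.c_pow_le k (by omega)
      have : q ^ k ≤ 1/(k:ℝ) := le_trans h2 h3
      linarith
  · -- Part 2
    intro l hl q hql hqu k hk
    have hq1 : q < 1 := lt_trans hqu (hroot l hl).1.2
    -- lower bound for qstar (l-1)
    have hlow : ((l:ℝ)-1)/(l:ℝ) ≤ qstar (l-1) := by
      rcases Nat.lt_or_ge l 4 with h4|h4
      · have hl3 : l = 3 := by omega
        subst hl3
        rw [hq2]
        norm_num
        exact SI.c_ge
      · have h3 : 3 ≤ l - 1 := by omega
        have := hge (l-1) h3
        rw [Nat.cast_sub (by omega : 1 ≤ l), Nat.cast_one] at this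
        rw [show (l:ℝ) - 1 + 1 = (l:ℝ) by ring] at this
        exact this
    have hlpos : (0:ℝ) < (l:ℝ) := by exact_mod_cast (by omega : 0 < l)
    have hl3 : (3:ℝ) ≤ (l:ℝ) := by exact_mod_cast hl
    have hlow0 : (0:ℝ) < ((l:ℝ)-1)/(l:ℝ) := by
      apply div_pos (by linarith) hlpos
    have hq0 : 0 < q := lt_trans (lt_of_lt_of_le hlow0 hlow) hql
    -- key: q^l ≥ 1/l
    have hql_pow : 1/(l:ℝ) ≤ q ^ l := by
      rcases Nat.lt_or_ge l 4 with h4|h4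
      · have hl3' : l = 3 := by omega
        subst hl3'
        rw [hq2] at hql
        have : (((1:ℝ)/3) ^ ((1:ℝ)/3)) ^ (3:ℕ) ≤ q ^ (3:ℕ) :=
          pow_le_pow_left₀ (le_of_lt SI.c_pos) (le_of_lt hql) 3
        rw [SI.c_cube] at this
        norm_num at this ⊢
        linarith
      · -- l ≥ 4 : use the root equation at l-1
        set m := l - 1 with hm
        have hm3 : 3 ≤ m := by omega
        have hml : l = m + 1 := by omega
        set s := qstar m with hs
        have hs01 := (hroot m hm3).1
        have hseq := (hroot m hm3).2.1
        have hsge : ((l:ℝ)-1)/(l:ℝ) ≤ s := hlow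
        have hmcast : (m:ℝ) = (l:ℝ) - 1 := by
          rw [hm, Nat.cast_sub (by omega : 1 ≤ l), Nat.cast_one]
        rw [hmcast, show (l:ℝ) - 1 + 1 = (l:ℝ) by ring] at hseq
        -- s^l ≥ 1/l
        have hLs : (l:ℝ) - 1 ≤ (l:ℝ) * s := by
          have := (div_le_iff₀ hlpos).mp hsge
          linarith
        have hA0 : (0:ℝ) < s ^ m := pow_pos hs01.1 m
        have hsl : s ^ l = s ^ m * s := by rw [hml, pow_succ]
        have he1 : s ^ m * (1-s) * (((l:ℝ)-1) * (l:ℝ)) = 1 := by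
          rw [hseq]
          field_simp
          rw [div_self (ne_of_gt (by linarith : (0:ℝ) < (l:ℝ)-1))]
        have hkey : 1/(l:ℝ) ≤ s ^ l := by
          rw [hsl, div_le_iff₀ hlpos]
          nlinarith [mul_nonneg (mul_nonneg (le_of_lt hA0) (le_of_lt hlpos))
            (by linarith : (0:ℝ) ≤ (l:ℝ)*s - ((l:ℝ)-1))]
        refine le_trans hkey ?_
        exact pow_le_pow_left₀ (le_of_lt hs01.1) (le_of_lt hql) l
    have hE1 : E l (1-q) ≤ 1 := by
      rw [SI.E_of_ne l (by omega)]
      linarith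
    -- step down: for 2 ≤ j ≤ l-1, E (j+1) ≤ E j
    have hstep_down : ∀ j : ℕ, 2 ≤ j → j + 1 ≤ l → E (j+1) (1-q) ≤ E j (1-q) := by
      intro j hj2 hjl
      have hφ : q^j*(1-q) ≤ 1/((j:ℝ)*(j+1)) := by
        rcases Nat.lt_or_ge j 3 with h3|h3
        · have hj2' : j = 2 := by omega
          subst hj2'
          push_cast
          nlinarith [sq_nonneg (3*q-2), le_of_lt hq0, le_of_lt hq1]
        · -- j ≥ 3 : q > qstar j ≥ j/(j+1), phi decreasing
          have hqj : qstar j < q := by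
            rcases Nat.lt_or_ge l 4 with h4|h4
            · omega
            · exact lt_of_le_of_lt (hmono j (l-1) h3 (by omega)) hql
          have hj1 : (1:ℕ) ≤ j := by omega
          have hmem1 : qstar j ∈ Icc ((j:ℝ)/(j+1)) 1 :=
            ⟨hge j h3, le_of_lt (hroot j h3).1.2⟩
          have hmem2 : q ∈ Icc ((j:ℝ)/(j+1)) 1 :=
            ⟨le_trans (hge j h3) (le_of_lt hqj), le_of_lt hq1⟩
          have := SI.phi_anti j hj1 hmem1 hmem2 hqj
          simp only at this
          rw [(hroot j h3).2.1] at this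
          exact le_of_lt this
      have hd := SI.E_diff j hj2 q
      linarith
    rcases lt_trichotomy k l with hkl|hkl|hkl
    · -- k < l
      rcases eq_or_lt_of_le hk with h1|h1
      · rw [← h1, SI.E_one]
        exact hE1
      · -- 2 ≤ k < l : descend
        have hdesc : ∀ n : ℕ, ∀ j : ℕ, 2 ≤ j → j ≤ l → l - j ≤ n →
            E l (1-q) ≤ E j (1-q) := by
          intro n
          induction n with
          | zero =>
            intro j hj2 hjl hn
            have : j = l := by omega
            rw [this]
          | succ n ih =>
            intro j hj2 hjl hn
            rcases eq_or_lt_of_le hjl with he|hlt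
            · rw [he]
            · exact le_trans (ih (j+1) (by omega) (by omega) (by omega))
                (hstep_down j hj2 (by omega))
        exact hdesc l k (by omega) (le_of_lt hkl) (by omega)
    · rw [hkl]
    · -- k > l : ascend
      have hup : ∀ n : ℕ, l ≤ n → E l (1-q) ≤ E n (1-q) := by
        intro n hn
        induction n, hn using Nat.le_induction with
        | base => exact le_refl _
        | succ n hn ih =>
          have hn3 : 3 ≤ n := le_trans hl hn
          have hn0 : (0:ℝ) < (n:ℝ) := by exact_mod_cast (by omega : 0 < n)
          by_cases hcase : q ^ (n+1) ≤ 1/((n:ℝ)+1)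
          · -- E (n+1) ≥ 1 ≥ E l
            rw [SI.E_of_ne (n+1) (by omega)]
            push_cast
            linarith
          · push_neg at hcase
            refine le_trans ih ?_
            have hφ : 1/((n:ℝ)*(n+1)) ≤ q^n*(1-q) := by
              by_cases hqs : q ≤ (n:ℝ)/((n:ℝ)+1)
              · -- computational case
                have hqn : q ^ (n+1) = q ^ n * q := pow_succ q n
                have h1 : 1 < q ^ n * q * ((n:ℝ)+1) := by
                  rw [← hqn]
                  have := (div_lt_iff₀ (by positivity : (0:ℝ) < (n:ℝ)+1)).mp hcase
                  linarith
                have h2 : q * ((n:ℝ)+1) ≤ (n:ℝ) :=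
                  (le_div_iff₀ (by positivity : (0:ℝ) < (n:ℝ)+1)).mp hqs
                rw [div_le_iff₀ (by positivity)]
                have hP0 : (0:ℝ) ≤ q ^ n := le_of_lt (pow_pos hq0 n)
                nlinarith [mul_nonneg (mul_nonneg (by positivity : (0:ℝ) ≤ (n:ℝ)+1) hP0)
                  (by linarith : (0:ℝ) ≤ (n:ℝ)*(1-q) - q)]
              · -- q in the decreasing region, below qstar n
                push_neg at hqs
                have hqn : q ≤ qstar n := le_of_lt (lt_of_lt_of_le hqu (hmono l n hl hn))
                have hmem1 : q ∈ Icc ((n:ℝ)/((n:ℝ)+1)) 1 := ⟨le_of_lt hqs, le_of_lt hq1⟩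
                have hmem2 : qstar n ∈ Icc ((n:ℝ)/((n:ℝ)+1)) 1 :=
                  ⟨hge n hn3, le_of_lt (hroot n hn3).1.2⟩
                have := ((SI.phi_anti n (by omega)).antitoneOn) hmem1 hmem2 hqn
                simp only at this
                rw [(hroot n hn3).2.1] at this
                exact this
            have hd := SI.E_diff n (by omega) q
            linarith
      exact hup k (le_of_lt hkl)
end

section
/- The optimal expected number of tests per person tends to 0 as p tends to 0 from above: lim_{p→0⁺} min_{k ≥ 1} E(k,p) = 0. -/
open Real Set Filter

lemma E_nonneg {p : ℝ} (hp0 : 0 < p) (hp1 : p < 1) (k : ℕ) : 0 ≤ E k p := by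
  unfold E
  split
  · norm_num
  · have h1 : (1 - p) ^ k ≤ 1 := pow_le_one₀ (by linarith) (by linarith)
    have h2 : (0:ℝ) ≤ 1 / k := by positivity
    linarith

theorem Estar_tendsto_zero :
    Filter.Tendsto Estar (nhdsWithin 0 (Set.Ioi 0)) (nhds 0) := by
  rw [Metric.tendsto_nhdsWithin_nhds]
  intro ε hε
  obtain ⟨k, hk⟩ := exists_nat_gt (max 2 (4 / ε))
  have hk2 : (2:ℝ) < k := lt_of_le_of_lt (le_max_left _ _) hk
  have hk4 : 4 / ε < k := lt_of_le_of_lt (le_max_right _ _) hk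
  have hkpos : (0:ℝ) < k := by linarith
  have hkposn : 0 < k := by exact_mod_cast hkpos
  have hkne1 : k ≠ 1 := by
    intro h; rw [h] at hk2; norm_num at hk2
  refine ⟨min 1 (ε / (2 * k)), by positivity, ?_⟩
  intro p hp hd
  simp only [Set.mem_Ioi] at hp
  rw [Real.dist_eq, sub_zero] at hd ⊢
  rw [abs_of_pos hp] at hd
  have hp1 : p < 1 := lt_of_lt_of_le hd (min_le_left _ _)
  have hpk : p < ε / (2 * k) := lt_of_lt_of_le hd (min_le_right _ _)
  have hbdd : BddBelow (Set.range fun j : ℕ+ => E j p) := by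
    refine ⟨0, ?_⟩
    rintro x ⟨j, rfl⟩
    exact E_nonneg hp hp1 j
  have h0 : 0 ≤ Estar p := le_ciInf fun j => E_nonneg hp hp1 j
  have hku : Estar p ≤ E k p := by
    have := ciInf_le hbdd (⟨k, hkposn⟩ : ℕ+)
    simpa [Estar] using this
  have hE : E k p < ε := by
    unfold E
    rw [if_neg hkne1]
    have hbern : 1 - (k:ℝ) * p ≤ (1 - p) ^ k := by
      have := one_add_mul_le_pow (a := -p) (by linarith) k
      simpa [sub_eq_add_neg, mul_comm] using this
    have h1k : 1 / (k:ℝ) < ε / 2 := by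
      rw [div_lt_div_iff₀ hkpos (by norm_num)]
      have h4 : 4 < (k:ℝ) * ε := (div_lt_iff₀ hε).mp hk4
      nlinarith
    have hkp : (k:ℝ) * p < ε / 2 := by
      have h : (k:ℝ) * p < k * (ε / (2 * k)) := by
        exact mul_lt_mul_of_pos_left hpk hkpos
      have heq : (k:ℝ) * (ε / (2 * k)) = ε / 2 := by
        field_simp
      linarith
    linarith
  rw [abs_of_nonneg h0]
  linarith
end
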